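/- For all integers 0 ≤ y ≤ x ≤ n and 0 ≤ k+y ≤ n+x, the ratio C(n+x, k+y) / C(2(n+x), 2(k+y)) is at most C(n, k) / C(2n, 2k). In other words, the function (n,k) ↦ C(n,k)/C(2n,2k) is monotonically non-increasing when n and k are simultaneously increased by x and y respectively with y ≤ x. -/

import Mathlib

private lemma natA (k m : ℕ) :
    (k + m + 1).choose k * (2 * (k + m)).choose (2 * k) ≤
      (k + m).choose k * (2 * (k + m) + 2).choose (2 * k) := by
  have E1 := Nat.choose_mul_succ_eq (k + m) k
  have E2 := Nat.choose_mul_succ_eq (2 * (k + m)) (2 * k)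
  have E3 := Nat.choose_mul_succ_eq (2 * (k + m) + 1) (2 * k)
  have h1 : k + m + 1 - k = m + 1 := by omega
  have h2 : 2 * (k + m) + 1 - 2 * k = 2 * m + 1 := by omega
  have h3 : 2 * (k + m) + 1 + 1 - 2 * k = 2 * m + 2 := by omega
  rw [h1] at E1; rw [h2] at E2; rw [h3] at E3
  set A := (k + m).choose k with hA
  set A' := (k + m + 1).choose k with hA'
  set B := (2 * (k + m)).choose (2 * k) with hB
  set C := (2 * (k + m) + 1).choose (2 * k) with hC
  set B' := (2 * (k + m) + 1 + 1).choose (2 * k) with hB'2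
  have key : ((m + 1) * ((2 * (k + m) + 1) * (2 * (k + m) + 1 + 1))) * (A' * B) ≤
      ((m + 1) * ((2 * (k + m) + 1) * (2 * (k + m) + 1 + 1))) * (A * B') := by
    calc ((m + 1) * ((2 * (k + m) + 1) * (2 * (k + m) + 1 + 1))) * (A' * B)
        = (A' * (m + 1)) * (B * (2 * (k + m) + 1)) * (2 * (k + m) + 1 + 1) := by ring
      _ = (A * (k + m + 1)) * (C * (2 * m + 1)) * (2 * (k + m) + 1 + 1) := by rw [← E1, ← E2]
      _ = (A * (k + m + 1) * (2 * m + 1)) * (C * (2 * (k + m) + 1 + 1)) := by ring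
      _ = (A * (k + m + 1) * (2 * m + 1)) * (B' * (2 * m + 2)) := by rw [E3]
      _ = (A * B' * (2 * (m + 1) * (k + m + 1))) * (2 * m + 1) := by ring
      _ ≤ (A * B' * (2 * (m + 1) * (k + m + 1))) * (2 * (k + m) + 1) :=
          Nat.mul_le_mul_left _ (by omega)
      _ = ((m + 1) * ((2 * (k + m) + 1) * (2 * (k + m) + 1 + 1))) * (A * B') := by ring
  exact Nat.le_of_mul_le_mul_left key (by positivity)

private lemma natB (k m : ℕ) :
    (k + m + 1).choose (k + 1) * (2 * (k + m)).choose (2 * k) ≤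
      (k + m).choose k * (2 * (k + m) + 2).choose (2 * k + 2) := by
  have E1 := Nat.add_one_mul_choose_eq (k + m) k
  have E2 := Nat.add_one_mul_choose_eq (2 * (k + m)) (2 * k)
  have E3 := Nat.add_one_mul_choose_eq (2 * (k + m) + 1) (2 * k + 1)
  simp -failIfUnchanged only [Nat.succ_eq_add_one] at E1 E2 E3
  set A := (k + m).choose k with hA
  set A' := (k + m + 1).choose (k + 1) with hA'
  set B := (2 * (k + m)).choose (2 * k) with hB
  set C := (2 * (k + m) + 1).choose (2 * k + 1) with hC
  set B' := (2 * (k + m) + 1 + 1).choose (2 * k + 1 + 1) with hB'2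
  have key : ((k + 1) * ((2 * (k + m) + 1) * (2 * (k + m) + 1 + 1))) * (A' * B) ≤
      ((k + 1) * ((2 * (k + m) + 1) * (2 * (k + m) + 1 + 1))) * (A * B') := by
    calc ((k + 1) * ((2 * (k + m) + 1) * (2 * (k + m) + 1 + 1))) * (A' * B)
        = (A' * (k + 1)) * ((2 * (k + m) + 1) * B) * (2 * (k + m) + 1 + 1) := by ring
      _ = ((k + m + 1) * A) * (C * (2 * k + 1)) * (2 * (k + m) + 1 + 1) := by rw [← E1, ← E2]
      _ = ((k + m + 1) * A * (2 * k + 1)) * ((2 * (k + m) + 1 + 1) * C) := by ring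
      _ = ((k + m + 1) * A * (2 * k + 1)) * (B' * (2 * k + 1 + 1)) := by rw [E3]
      _ = (A * B' * (2 * (k + 1) * (k + m + 1))) * (2 * k + 1) := by ring
      _ ≤ (A * B' * (2 * (k + 1) * (k + m + 1))) * (2 * (k + m) + 1) :=
          Nat.mul_le_mul_left _ (by omega)
      _ = ((k + 1) * ((2 * (k + m) + 1) * (2 * (k + m) + 1 + 1))) * (A * B') := by ring
  exact Nat.le_of_mul_le_mul_left key (by positivity)

private lemma stepA (n k : ℕ) (h : k ≤ n) :
    ((n + 1).choose k : ℝ) / ((2 * (n + 1)).choose (2 * k) : ℝ) ≤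
      (n.choose k : ℝ) / ((2 * n).choose (2 * k) : ℝ) := by
  have hb1 : (0 : ℝ) < ((2 * (n + 1)).choose (2 * k) : ℝ) := by
    exact_mod_cast Nat.choose_pos (by omega)
  have hb2 : (0 : ℝ) < ((2 * n).choose (2 * k) : ℝ) := by
    exact_mod_cast Nat.choose_pos (by omega)
  rw [div_le_div_iff₀ hb1 hb2]
  obtain ⟨m, rfl⟩ := Nat.exists_eq_add_of_le h
  have := natA k m
  have h2 : 2 * (k + m + 1) = 2 * (k + m) + 2 := by ring
  rw [h2]
  exact_mod_cast this

private lemma stepB (n k : ℕ) (h : k ≤ n) :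
    ((n + 1).choose (k + 1) : ℝ) / ((2 * (n + 1)).choose (2 * (k + 1)) : ℝ) ≤
      (n.choose k : ℝ) / ((2 * n).choose (2 * k) : ℝ) := by
  have hb1 : (0 : ℝ) < ((2 * (n + 1)).choose (2 * (k + 1)) : ℝ) := by
    exact_mod_cast Nat.choose_pos (by omega)
  have hb2 : (0 : ℝ) < ((2 * n).choose (2 * k) : ℝ) := by
    exact_mod_cast Nat.choose_pos (by omega)
  rw [div_le_div_iff₀ hb1 hb2]
  obtain ⟨m, rfl⟩ := Nat.exists_eq_add_of_le h
  have := natB k m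
  have h2 : 2 * (k + m + 1) = 2 * (k + m) + 2 := by ring
  have h4 : 2 * (k + 1) = 2 * k + 2 := by ring
  rw [h2, h4]
  exact_mod_cast this

private lemma iterA (d n k : ℕ) (h : k ≤ n) :
    ((n + d).choose k : ℝ) / ((2 * (n + d)).choose (2 * k) : ℝ) ≤
      (n.choose k : ℝ) / ((2 * n).choose (2 * k) : ℝ) := by
  induction d with
  | zero => simp
  | succ d ih =>
      calc ((n + (d + 1)).choose k : ℝ) / ((2 * (n + (d + 1))).choose (2 * k) : ℝ)
          = ((n + d + 1).choose k : ℝ) / ((2 * (n + d + 1)).choose (2 * k) : ℝ) := by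
            rw [show n + (d + 1) = n + d + 1 by ring]
        _ ≤ ((n + d).choose k : ℝ) / ((2 * (n + d)).choose (2 * k) : ℝ) :=
            stepA (n + d) k (by omega)
        _ ≤ _ := ih

private lemma iterB (d n k : ℕ) (h : k ≤ n) :
    ((n + d).choose (k + d) : ℝ) / ((2 * (n + d)).choose (2 * (k + d)) : ℝ) ≤
      (n.choose k : ℝ) / ((2 * n).choose (2 * k) : ℝ) := by
  induction d with
  | zero => simp
  | succ d ih =>
      calc ((n + (d + 1)).choose (k + (d + 1)) : ℝ) /
            ((2 * (n + (d + 1))).choose (2 * (k + (d + 1))) : ℝ)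
          = ((n + d + 1).choose (k + d + 1) : ℝ) /
            ((2 * (n + d + 1)).choose (2 * (k + d + 1)) : ℝ) := by
            rw [show n + (d + 1) = n + d + 1 by ring, show k + (d + 1) = k + d + 1 by ring]
        _ ≤ ((n + d).choose (k + d) : ℝ) / ((2 * (n + d)).choose (2 * (k + d)) : ℝ) :=
            stepB (n + d) (k + d) (by omega)
        _ ≤ _ := ih

theorem stmt_1 (n k x y : ℕ) (hyx : y ≤ x) (hkn : k ≤ n) (hky : k + y ≤ n + x) :
    ((n + x).choose (k + y) : ℝ) / ((2 * (n + x)).choose (2 * (k + y)) : ℝ) ≤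
      (n.choose k : ℝ) / ((2 * n).choose (2 * k) : ℝ) := by
  obtain ⟨d, rfl⟩ := Nat.exists_eq_add_of_le hyx
  calc ((n + (y + d)).choose (k + y) : ℝ) / ((2 * (n + (y + d))).choose (2 * (k + y)) : ℝ)
      = ((n + d + y).choose (k + y) : ℝ) / ((2 * (n + d + y)).choose (2 * (k + y)) : ℝ) := by
        rw [show n + (y + d) = n + d + y by ring]
    _ ≤ ((n + d).choose k : ℝ) / ((2 * (n + d)).choose (2 * k) : ℝ) :=
        iterB y (n + d) k (by omega)
    _ ≤ _ := iterA d n k hkn
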